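/- Let n ≥ 3 and let Γ be the digraph of order n² on vertex set V = Fin n × Fin n whose adjacency matrix A is given by: A (i,q) (j,q') = 1 if (i = 0, j ≠ 0, and q = q') or (i ≠ 0, j = 0, and q ≠ q'), and A (i,q) (j,q') = 0 otherwise (in block form, the (1,j)-blocks for j ≥ 2 are identity matrices I_n, the (i,1)-blocks for i ≥ 2 are J_n − I_n, and all other blocks are zero). Then Γ is restricted-normal — its Laplacian L is not a normal matrix but QᴴLQ is normal for a restrictor matrix Q of order n² — and Γ is not a directed join: there is no set S ⊆ V with S ≠ ∅ and S ≠ V such that A u v = 1 and A v u = 0 for all u ∈ S, v ∉ S. -/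

import Mathlib

open Matrix

/-- A 0/1 adjacency matrix with zero diagonal. -/
def IsAdj {m : Type*} [Fintype m] (A : Matrix m m ℝ) : Prop :=
  (∀ i j, A i j = 0 ∨ A i j = 1) ∧ ∀ i, A i i = 0

/-- Laplacian of a digraph: `L i i = d⁺(i)` and `L i j = -A i j` for `i ≠ j`. -/
noncomputable def lap {m : Type*} [Fintype m] [DecidableEq m] (A : Matrix m m ℝ) :
    Matrix m m ℝ :=
  Matrix.diagonal (fun i => ∑ j, A i j) - A

/-- Complexified Laplacian. -/
noncomputable def lapC {m : Type*} [Fintype m] [DecidableEq m] (A : Matrix m m ℝ) :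
    Matrix m m ℂ :=
  (lap A).map (fun x => (x : ℂ))

/-- Restricted numerical range `W_r(M) = { xᴴ M x : ‖x‖ = 1, xᴴ e = 0 }`. -/
noncomputable def rnr {m : Type*} [Fintype m] (M : Matrix m m ℂ) : Set ℂ :=
  { z | ∃ x : EuclideanSpace ℂ m, ‖x‖ = 1 ∧ star (x : m → ℂ) ⬝ᵥ (fun _ => (1 : ℂ)) = 0 ∧
      z = star (x : m → ℂ) ⬝ᵥ M.mulVec (x : m → ℂ) }

/-- Restrictor matrix: orthonormal columns, all orthogonal to the all-ones vector. -/
def IsRestrictor {m k : Type*} [Fintype m] [Fintype k] [DecidableEq k]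
    (Q : Matrix m k ℂ) : Prop :=
  Qᴴ * Q = 1 ∧ Qᴴ *ᵥ (fun _ => (1 : ℂ)) = 0

/-- Normal matrix: `Mᴴ M = M Mᴴ` (for real matrices, `Mᵀ M = M Mᵀ`). -/
def IsNormalM {m R : Type*} [Fintype m] [Mul (Matrix m m R)] [Star (Matrix m m R)]
    (M : Matrix m m R) : Prop := star M * M = M * star M

/-- Balanced digraph: `d⁺(i) = d⁻(i)` for every vertex. -/
def Bal {m : Type*} [Fintype m] (A : Matrix m m ℝ) : Prop :=
  ∀ i, ∑ j, A i j = ∑ j, A j i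

open Finset

variable {n : ℕ}

lemma sumK0 (hn : 0 < n) : ∑ k : Fin n, (if k.val = 0 then (1:ℝ) else 0) = 1 := by
  have h : ∀ k : Fin n, (k.val = 0) ↔ (k = ⟨0, hn⟩) := fun k => by rw [Fin.ext_iff]
  simp_rw [h]; simp [Finset.sum_ite_eq']

lemma sumKn (hn : 0 < n) : ∑ k : Fin n, (if k.val ≠ 0 then (1:ℝ) else 0) = (n:ℝ) - 1 := by
  have h : ∀ k : Fin n, (if k.val ≠ 0 then (1:ℝ) else 0) = 1 - (if k.val = 0 then 1 else 0) := by
    intro k; by_cases h : k.val = 0 <;> simp [h]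
  rw [Finset.sum_congr rfl fun k _ => h k, Finset.sum_sub_distrib, sumK0 hn]; simp

lemma sumRq (q : Fin n) : ∑ r : Fin n, (if r = q then (1:ℝ) else 0) = 1 := by
  simp [Finset.sum_ite_eq']

lemma sumRnq (q : Fin n) : ∑ r : Fin n, (if r ≠ q then (1:ℝ) else 0) = (n:ℝ) - 1 := by
  have h : ∀ r : Fin n, (if r ≠ q then (1:ℝ) else 0) = 1 - (if r = q then 1 else 0) := by
    intro r; by_cases h : r = q <;> simp [h]
  rw [Finset.sum_congr rfl fun r _ => h r, Finset.sum_sub_distrib, sumRq]; simp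

lemma sumRnn (q p : Fin n) (hqp : q ≠ p) :
    ∑ r : Fin n, (if r ≠ q ∧ r ≠ p then (1:ℝ) else 0) = (n:ℝ) - 2 := by
  have h : ∀ r : Fin n, (if r ≠ q ∧ r ≠ p then (1:ℝ) else 0)
      = 1 - (if r = q then 1 else 0) - (if r = p then 1 else 0) := by
    intro r
    by_cases h1 : r = q <;> by_cases h2 : r = p <;> simp [h1, h2] <;> simp_all
  rw [Finset.sum_congr rfl fun r _ => h r]
  rw [Finset.sum_sub_distrib, Finset.sum_sub_distrib, sumRq, sumRq]
  simp; ring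

lemma sumRq' (q : Fin n) : ∑ r : Fin n, (if q = r then (1:ℝ) else 0) = 1 := by
  simp [Finset.sum_ite_eq]

lemma sumRnq' (q : Fin n) : ∑ r : Fin n, (if q ≠ r then (1:ℝ) else 0) = (n:ℝ) - 1 := by
  have h : ∀ r : Fin n, (if q ≠ r then (1:ℝ) else 0) = 1 - (if q = r then 1 else 0) := by
    intro r; by_cases h : q = r <;> simp [h]
  rw [Finset.sum_congr rfl fun r _ => h r, Finset.sum_sub_distrib, sumRq']; simp

lemma sumRnn' (q p : Fin n) (hqp : q ≠ p) :
    ∑ r : Fin n, (if q ≠ r ∧ p ≠ r then (1:ℝ) else 0) = (n:ℝ) - 2 := by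
  have h : ∀ r : Fin n, (if q ≠ r ∧ p ≠ r then (1:ℝ) else 0)
      = 1 - (if q = r then 1 else 0) - (if p = r then 1 else 0) := by
    intro r
    by_cases h1 : q = r <;> by_cases h2 : p = r <;> simp [h1, h2] <;> simp_all
  rw [Finset.sum_congr rfl fun r _ => h r]
  rw [Finset.sum_sub_distrib, Finset.sum_sub_distrib, sumRq', sumRq']
  simp; ring



section withA
variable (hn : 3 ≤ n) (A : Matrix (Fin n × Fin n) (Fin n × Fin n) ℝ)
    (hA : ∀ p q : Fin n × Fin n, A p q =
      if (p.1.val = 0 ∧ q.1.val ≠ 0 ∧ p.2 = q.2) ∨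
         (p.1.val ≠ 0 ∧ q.1.val = 0 ∧ p.2 ≠ q.2) then 1 else 0)
include hn hA

lemma sum1_eval (i j q p : Fin n) :
    ∑ k : Fin n × Fin n, A k (i,q) * A k (j,p) =
      if i.val = 0 then
        (if j.val = 0 then ((n:ℝ)-1) * (((n:ℝ)-2) + if q = p then 1 else 0) else 0)
      else
        (if j.val = 0 then 0 else (if q = p then 1 else 0)) := by
  have hn0 : 0 < n := by omega
  rw [Fintype.sum_prod_type]
  by_cases hi : i.val = 0 <;> by_cases hj : j.val = 0 <;> simp only [hi, hj, if_true, if_false, if_pos, if_neg, not_false_iff]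
  · by_cases hqp : q = p
    · subst hqp
      have h : ∀ k r : Fin n, A (k,r) (i,q) * A (k,r) (j,q)
          = (if k.val ≠ 0 then (1:ℝ) else 0) * (if r ≠ q then 1 else 0) := by
        intro k r
        by_cases hk : k.val = 0 <;> by_cases hr : r = q <;> simp [hA, hi, hj, hk, hr]
      simp_rw [h]
      rw [← Fintype.sum_mul_sum, sumKn hn0, sumRnq, if_pos trivial]
      ring
    · have h : ∀ k r : Fin n, A (k,r) (i,q) * A (k,r) (j,p)
          = (if k.val ≠ 0 then (1:ℝ) else 0) * (if r ≠ q ∧ r ≠ p then 1 else 0) := by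
        intro k r
        by_cases hk : k.val = 0 <;> by_cases hr : r = q <;> by_cases hr2 : r = p <;>
          simp [hA, hi, hj, hk, hr, hr2]
      simp_rw [h]
      rw [← Fintype.sum_mul_sum, sumKn hn0, sumRnn q p hqp, if_neg hqp]
      ring
  · refine Finset.sum_eq_zero fun k _ => Finset.sum_eq_zero fun r _ => ?_
    by_cases hk : k.val = 0 <;> simp [hA, hi, hj, hk]
  · refine Finset.sum_eq_zero fun k _ => Finset.sum_eq_zero fun r _ => ?_
    by_cases hk : k.val = 0 <;> simp [hA, hi, hj, hk]
  · by_cases hqp : q = p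
    · subst hqp
      have h : ∀ k r : Fin n, A (k,r) (i,q) * A (k,r) (j,q)
          = (if k.val = 0 then (1:ℝ) else 0) * (if r = q then 1 else 0) := by
        intro k r
        by_cases hk : k.val = 0 <;> by_cases hr : r = q <;> simp [hA, hi, hj, hk, hr]
      simp_rw [h]
      rw [← Fintype.sum_mul_sum, sumK0 hn0, sumRq, if_pos trivial]
      ring
    · rw [if_neg hqp]
      refine Finset.sum_eq_zero fun k _ => Finset.sum_eq_zero fun r _ => ?_
      by_cases hk : k.val = 0 <;> by_cases hr : r = q <;> by_cases hr2 : r = p <;>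
        simp [hA, hi, hj, hk, hr, hr2] <;> simp_all

lemma sum2_eval (i j q p : Fin n) :
    ∑ k : Fin n × Fin n, A (i,q) k * A (j,p) k =
      if i.val = 0 then
        (if j.val = 0 then ((n:ℝ)-1) * (if q = p then 1 else 0) else 0)
      else
        (if j.val = 0 then 0 else (((n:ℝ)-2) + if q = p then 1 else 0)) := by
  have hn0 : 0 < n := by omega
  rw [Fintype.sum_prod_type]
  by_cases hi : i.val = 0 <;> by_cases hj : j.val = 0 <;> simp only [hi, hj, if_true, if_false, if_pos, if_neg, not_false_iff]
  · by_cases hqp : q = p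
    · subst hqp
      have h : ∀ k r : Fin n, A (i,q) (k,r) * A (j,q) (k,r)
          = (if k.val ≠ 0 then (1:ℝ) else 0) * (if q = r then 1 else 0) := by
        intro k r
        by_cases hk : k.val = 0 <;> by_cases hr : q = r <;> simp [hA, hi, hj, hk, hr]
      simp_rw [h]
      rw [← Fintype.sum_mul_sum, sumKn hn0, sumRq', if_pos trivial]
    · rw [if_neg hqp, mul_zero]
      refine Finset.sum_eq_zero fun k _ => Finset.sum_eq_zero fun r _ => ?_
      by_cases hk : k.val = 0 <;> by_cases hr : q = r <;> by_cases hr2 : p = r <;>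
        simp [hA, hi, hj, hk, hr, hr2] <;> simp_all
  · refine Finset.sum_eq_zero fun k _ => Finset.sum_eq_zero fun r _ => ?_
    by_cases hk : k.val = 0 <;> simp [hA, hi, hj, hk]
  · refine Finset.sum_eq_zero fun k _ => Finset.sum_eq_zero fun r _ => ?_
    by_cases hk : k.val = 0 <;> simp [hA, hi, hj, hk]
  · by_cases hqp : q = p
    · subst hqp
      have h : ∀ k r : Fin n, A (i,q) (k,r) * A (j,q) (k,r)
          = (if k.val = 0 then (1:ℝ) else 0) * (if q ≠ r then 1 else 0) := by
        intro k r
        by_cases hk : k.val = 0 <;> by_cases hr : q = r <;> simp [hA, hi, hj, hk, hr]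
      simp_rw [h]
      rw [← Fintype.sum_mul_sum, sumK0 hn0, sumRnq', if_pos trivial]
      ring
    · have h : ∀ k r : Fin n, A (i,q) (k,r) * A (j,p) (k,r)
          = (if k.val = 0 then (1:ℝ) else 0) * (if q ≠ r ∧ p ≠ r then 1 else 0) := by
        intro k r
        by_cases hk : k.val = 0 <;> by_cases hr : q = r <;> by_cases hr2 : p = r <;>
          simp [hA, hi, hj, hk, hr, hr2] <;> simp_all
      simp_rw [h]
      rw [← Fintype.sum_mul_sum, sumK0 hn0, sumRnn' q p hqp, if_neg hqp]
      ring
end withA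

variable {n : ℕ}

/-- value vector: column sums of the Laplacian -/
noncomputable def vR (n : ℕ) : Fin n × Fin n → ℝ := fun u =>
  if u.1.val = 0 then -(((n:ℝ)-1)*((n:ℝ)-2)) else (n:ℝ)-2

noncomputable def xR (n : ℕ) : Fin n × Fin n → ℝ := fun u =>
  (if u.1.val = 0 then ((n:ℝ)-2) + ((n:ℝ)-2)^2/(n:ℝ) else 0)
    - (((n:ℝ)-2) + ((n:ℝ)-2)^2/(n:ℝ)^2)/2

section withA
variable (hn : 3 ≤ n) (A : Matrix (Fin n × Fin n) (Fin n × Fin n) ℝ)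
    (hA : ∀ p q : Fin n × Fin n, A p q =
      if (p.1.val = 0 ∧ q.1.val ≠ 0 ∧ p.2 = q.2) ∨
         (p.1.val ≠ 0 ∧ q.1.val = 0 ∧ p.2 ≠ q.2) then 1 else 0)
include hn hA

lemma rowsum (u : Fin n × Fin n) : ∑ w, A u w = (n:ℝ) - 1 := by
  have hn0 : 0 < n := by omega
  obtain ⟨i, q⟩ := u
  rw [Fintype.sum_prod_type]
  by_cases hi : i.val = 0
  · have h : ∀ k r : Fin n, A (i,q) (k,r)
        = (if k.val ≠ 0 then (1:ℝ) else 0) * (if q = r then 1 else 0) := by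
      intro k r
      by_cases hk : k.val = 0 <;> by_cases hr : q = r <;> simp [hA, hi, hk, hr]
    simp_rw [h]
    rw [← Fintype.sum_mul_sum, sumKn hn0, sumRq']
    ring
  · have h : ∀ k r : Fin n, A (i,q) (k,r)
        = (if k.val = 0 then (1:ℝ) else 0) * (if q ≠ r then 1 else 0) := by
      intro k r
      by_cases hk : k.val = 0 <;> by_cases hr : q = r <;> simp [hA, hi, hk, hr]
    simp_rw [h]
    rw [← Fintype.sum_mul_sum, sumK0 hn0, sumRnq']
    ring

lemma colsum (u : Fin n × Fin n) :
    ∑ w, A w u = if u.1.val = 0 then ((n:ℝ)-1)^2 else 1 := by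
  have hn0 : 0 < n := by omega
  obtain ⟨i, q⟩ := u
  rw [Fintype.sum_prod_type]
  by_cases hi : i.val = 0 <;> simp only [hi, if_true, if_false, if_pos, if_neg, not_false_iff]
  · have h : ∀ k r : Fin n, A (k,r) (i,q)
        = (if k.val ≠ 0 then (1:ℝ) else 0) * (if r ≠ q then 1 else 0) := by
      intro k r
      by_cases hk : k.val = 0 <;> by_cases hr : r = q <;> simp [hA, hi, hk, hr]
    simp_rw [h]
    rw [← Fintype.sum_mul_sum, sumKn hn0, sumRnq]
    ring
  · have h : ∀ k r : Fin n, A (k,r) (i,q)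
        = (if k.val = 0 then (1:ℝ) else 0) * (if r = q then 1 else 0) := by
      intro k r
      by_cases hk : k.val = 0 <;> by_cases hr : r = q <;> simp [hA, hi, hk, hr]
    simp_rw [h]
    rw [← Fintype.sum_mul_sum, sumK0 hn0, sumRq]
    ring

lemma lap_eq : lap A = ((n:ℝ)-1) • (1 : Matrix (Fin n × Fin n) (Fin n × Fin n) ℝ) - A := by
  ext u w
  by_cases h : u = w <;>
    simp [lap, Matrix.diagonal_apply, h, rowsum hn A hA, Matrix.one_apply,
      Matrix.sub_apply, Matrix.smul_apply]

lemma RKEY : Aᵀ * A - A * Aᵀ =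
    (((n:ℝ))^2)⁻¹ • vecMulVec (vR n) (vR n)
      + vecMulVec (xR n) (fun _ => 1) + vecMulVec (fun _ => 1) (xR n) := by
  have hnR : (n:ℝ) ≠ 0 := by exact_mod_cast (by omega : n ≠ 0)
  ext u w
  obtain ⟨i, q⟩ := u; obtain ⟨j, p⟩ := w
  have h1 : (Aᵀ * A) (i,q) (j,p) = ∑ k, A k (i,q) * A k (j,p) := by
    simp [Matrix.mul_apply, Matrix.transpose_apply]
  have h2 : (A * Aᵀ) (i,q) (j,p) = ∑ k, A (i,q) k * A (j,p) k := by
    simp [Matrix.mul_apply, Matrix.transpose_apply]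
  simp only [Matrix.sub_apply, Matrix.add_apply, Matrix.smul_apply, vecMulVec_apply,
    h1, h2, sum1_eval hn A hA, sum2_eval hn A hA, vR, xR, smul_eq_mul]
  have h3 : (3:ℝ) ≤ (n:ℝ) := by exact_mod_cast hn
  by_cases hi : i.val = 0 <;> by_cases hj : j.val = 0 <;> by_cases hqp : q = p <;>
    simp only [hi, hj, hqp, if_true, if_false] <;> field_simp <;> ring
end withA


noncomputable def Jm (n : ℕ) : Matrix (Fin n × Fin n) (Fin n × Fin n) ℂ :=
  Matrix.of fun _ _ => 1

lemma key_cancel {R : Type*} [Ring R] (a b x : R) (ha : x*a = a*x) (hb : x*b = b*x) :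
    (x - a)*(x - b) - (x - b)*(x - a) = a*b - b*a := by
  have e : (x - a)*(x - b) - (x - b)*(x - a)
      = (x*a - a*x) + (b*x - x*b) + (a*b - b*a) := by noncomm_ring
  rw [e, ha, hb]
  abel

section withA2
variable {n : ℕ} (hn : 3 ≤ n) (A : Matrix (Fin n × Fin n) (Fin n × Fin n) ℝ)
    (hA : ∀ p q : Fin n × Fin n, A p q =
      if (p.1.val = 0 ∧ q.1.val ≠ 0 ∧ p.2 = q.2) ∨
         (p.1.val ≠ 0 ∧ q.1.val = 0 ∧ p.2 ≠ q.2) then 1 else 0)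
include hn hA

lemma lap_rowsum (u : Fin n × Fin n) : ∑ w, lap A u w = 0 := by
  simp only [lap, Matrix.sub_apply, Matrix.diagonal_apply, Finset.sum_sub_distrib]
  simp

lemma lap_colsum (u : Fin n × Fin n) : ∑ w, lap A w u = vR n u := by
  simp only [lap, Matrix.sub_apply, Matrix.diagonal_apply, Finset.sum_sub_distrib]
  rw [colsum hn A hA u]
  have h : ∑ w, (if w = u then ∑ j, A w j else 0) = (n:ℝ) - 1 := by
    rw [Finset.sum_ite_eq' Finset.univ u (fun w => ∑ j, A w j)]
    simp [rowsum hn A hA]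
  rw [h, vR]
  by_cases h0 : u.1.val = 0 <;> simp [h0] <;> ring

lemma lapC_eq : lapC A
    = (((n:ℝ)-1 : ℝ) : ℂ) • (1 : Matrix (Fin n × Fin n) (Fin n × Fin n) ℂ)
      - A.map (fun x => (x:ℂ)) := by
  rw [lapC, lap_eq hn A hA]
  ext u w
  by_cases h : u = w <;>
    simp [Matrix.map_apply, Matrix.sub_apply, Matrix.smul_apply, Matrix.one_apply, h]

lemma CKEY : (A.map (fun x => (x:ℂ)))ᴴ * A.map (fun x => (x:ℂ))
      - A.map (fun x => (x:ℂ)) * (A.map (fun x => (x:ℂ)))ᴴ =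
    ((n:ℂ)^2)⁻¹ • vecMulVec (fun u => ((vR n u : ℝ):ℂ)) (fun u => ((vR n u : ℝ):ℂ))
      + vecMulVec (fun u => ((xR n u : ℝ):ℂ)) (fun _ => 1)
      + vecMulVec (fun _ => 1) (fun u => ((xR n u : ℝ):ℂ)) := by
  ext u w
  have h := congrFun (congrFun (RKEY hn A hA) u) w
  simp only [Matrix.sub_apply, Matrix.add_apply, Matrix.smul_apply, vecMulVec_apply,
    Matrix.mul_apply, Matrix.transpose_apply, Matrix.conjTranspose_apply, Matrix.map_apply,
    smul_eq_mul, RCLike.star_def, Complex.conj_ofReal] at h ⊢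
  have h2 := congrArg (fun x : ℝ => (x : ℂ)) h
  push_cast at h2
  push_cast
  linear_combination h2

lemma MJ : lapC A * Jm n = 0 := by
  ext u w
  simp only [Matrix.mul_apply, Jm, Matrix.of_apply, mul_one, lapC, Matrix.map_apply,
    Matrix.zero_apply, ← Complex.ofReal_sum, lap_rowsum hn A hA]
  simp

lemma colsumC (u : Fin n × Fin n) : ∑ w, lapC A w u = ((vR n u : ℝ) : ℂ) := by
  simp only [lapC, Matrix.map_apply, ← Complex.ofReal_sum, lap_colsum hn A hA]

lemma MhJM : (lapC A)ᴴ * Jm n * lapC A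
    = vecMulVec (fun u => ((vR n u : ℝ):ℂ)) (fun u => ((vR n u : ℝ):ℂ)) := by
  ext u w
  have hstar : ∀ k u', star (lapC A k u') = lapC A k u' := by
    intro k u'; simp [lapC, Matrix.map_apply, RCLike.star_def, Complex.conj_ofReal]
  have h1 : ∀ l, ((lapC A)ᴴ * Jm n) u l = ∑ k, lapC A k u := by
    intro l
    simp only [Matrix.mul_apply, Matrix.conjTranspose_apply, Jm, Matrix.of_apply, mul_one]
    exact Finset.sum_congr rfl fun k _ => hstar k u
  rw [Matrix.mul_apply]
  simp only [h1, vecMulVec_apply]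
  rw [← Finset.mul_sum, colsumC hn A hA, colsumC hn A hA]
end withA2

section restrictor
variable {n : ℕ} (hn : 3 ≤ n) (Q : Matrix (Fin n × Fin n) (Fin (n ^ 2 - 1)) ℂ)
    (hQ : IsRestrictor Q)
include hn hQ

lemma Qcolsum (k : Fin (n ^ 2 - 1)) : ∑ j, Q j k = 0 := by
  have h := congrFun hQ.2 k
  simp only [Matrix.mulVec, dotProduct, Matrix.conjTranspose_apply, mul_one,
    Pi.zero_apply] at h
  have h2 := congrArg star h
  simpa [star_sum] using h2

lemma QcolsumStar (k : Fin (n ^ 2 - 1)) : ∑ j, (starRingEnd ℂ) (Q j k) = 0 := by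
  have h := congrFun hQ.2 k
  simpa [Matrix.mulVec, dotProduct, Matrix.conjTranspose_apply, RCLike.star_def] using h

lemma JQ : Jm n * Q = 0 := by
  ext u k
  simp [Jm, Matrix.mul_apply, Qcolsum hn Q hQ k]

lemma QJ : Qᴴ * Jm n = 0 := by
  ext k w
  simp [Jm, Matrix.mul_apply, Matrix.conjTranspose_apply, RCLike.star_def,
    QcolsumStar hn Q hQ k]

lemma cardVC : ((Fintype.card (Fin n × Fin n) : ℕ) : ℂ) = (n:ℂ)^2 := by
  rw [Fintype.card_prod]
  push_cast
  simp [Fintype.card_fin]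
  ring

lemma JJ : Jm n * Jm n = ((n:ℂ)^2) • Jm n := by
  ext u w
  simp only [Matrix.mul_apply, Jm, Matrix.of_apply, mul_one, Finset.sum_const,
    Finset.card_univ, nsmul_eq_mul, Matrix.smul_apply, smul_eq_mul]
  rw [cardVC hn Q hQ]

lemma traceJ : Matrix.trace (Jm n) = (n:ℂ)^2 := by
  simp only [Matrix.trace, Matrix.diag, Jm, Matrix.of_apply, Finset.sum_const,
    Finset.card_univ, nsmul_eq_mul, mul_one]
  rw [cardVC hn Q hQ]

lemma traceP : Matrix.trace (Q * Qᴴ) = (n:ℂ)^2 - 1 := by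
  rw [Matrix.trace_mul_comm, hQ.1, Matrix.trace_one]
  have h1 : (1:ℕ) ≤ n ^ 2 := by nlinarith
  rw [Fintype.card_fin, Nat.cast_sub h1]
  push_cast
  ring

lemma projQ : Q * Qᴴ = 1 - ((n:ℂ)^2)⁻¹ • Jm n := by
  have hN0 : ((n:ℂ)^2) ≠ 0 := by
    have h : (n:ℂ) ≠ 0 := by exact_mod_cast (by omega : n ≠ 0)
    exact pow_ne_zero 2 h
  have hPP : (Q * Qᴴ) * (Q * Qᴴ) = Q * Qᴴ := by
    rw [Matrix.mul_assoc, ← Matrix.mul_assoc Qᴴ Q Qᴴ, hQ.1, Matrix.one_mul]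
  have hPJ : (Q * Qᴴ) * Jm n = 0 := by
    rw [Matrix.mul_assoc, QJ hn Q hQ, Matrix.mul_zero]
  have hJP : Jm n * (Q * Qᴴ) = 0 := by
    rw [← Matrix.mul_assoc, JQ hn Q hQ, Matrix.zero_mul]
  have hPR : (Q * Qᴴ) * (1 - ((n:ℂ)^2)⁻¹ • Jm n) = Q * Qᴴ := by
    rw [Matrix.mul_sub, Matrix.mul_one, Matrix.mul_smul, hPJ]
    simp
  have hRP : (1 - ((n:ℂ)^2)⁻¹ • Jm n) * (Q * Qᴴ) = Q * Qᴴ := by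
    rw [Matrix.sub_mul, Matrix.one_mul, Matrix.smul_mul, hJP]
    simp
  have hRR : (1 - ((n:ℂ)^2)⁻¹ • Jm n) * (1 - ((n:ℂ)^2)⁻¹ • Jm n)
      = 1 - ((n:ℂ)^2)⁻¹ • Jm n := by
    simp only [Matrix.sub_mul, Matrix.mul_sub, Matrix.one_mul, Matrix.mul_one,
      Matrix.smul_mul, Matrix.mul_smul, smul_smul, JJ hn Q hQ]
    have h : ((n:ℂ)^2)⁻¹ * (n:ℂ)^2 = 1 := by exact inv_mul_cancel₀ hN0
    rw [h, one_smul, sub_self, smul_zero, sub_zero]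
  have hEE : ((1 - ((n:ℂ)^2)⁻¹ • Jm n) - Q * Qᴴ) * ((1 - ((n:ℂ)^2)⁻¹ • Jm n) - Q * Qᴴ)
      = (1 - ((n:ℂ)^2)⁻¹ • Jm n) - Q * Qᴴ := by
    rw [Matrix.sub_mul, Matrix.mul_sub, hRR, hRP, Matrix.mul_sub, hPR, hPP]
    abel
  have hEH : ((1 - ((n:ℂ)^2)⁻¹ • Jm n) - Q * Qᴴ)ᴴ
      = (1 - ((n:ℂ)^2)⁻¹ • Jm n) - Q * Qᴴ := by
    simp only [Matrix.conjTranspose_sub, Matrix.conjTranspose_one, Matrix.conjTranspose_smul,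
      Matrix.conjTranspose_mul, Matrix.conjTranspose_conjTranspose]
    have h1 : (Jm n)ᴴ = Jm n := by
      ext u w; simp [Jm, Matrix.conjTranspose_apply]
    have h2 : star (((n:ℂ)^2)⁻¹) = ((n:ℂ)^2)⁻¹ := by
      simp [star_inv₀, star_pow, Complex.star_def, Complex.conj_natCast]
    rw [h1, h2]
  have htrE : Matrix.trace ((1 - ((n:ℂ)^2)⁻¹ • Jm n) - Q * Qᴴ) = 0 := by
    rw [Matrix.trace_sub, Matrix.trace_sub, Matrix.trace_smul, traceJ hn Q hQ,
      traceP hn Q hQ, Matrix.trace_one]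
    have h : ((n:ℂ)^2)⁻¹ • (n:ℂ)^2 = 1 := by
      rw [smul_eq_mul]; exact inv_mul_cancel₀ hN0
    rw [h]
    rw [cardVC hn Q hQ]
    ring
  set E : Matrix (Fin n × Fin n) (Fin n × Fin n) ℂ := (1 - ((n:ℂ)^2)⁻¹ • Jm n) - Q * Qᴴ
    with hE
  have hE0 : E = 0 := by
    have h1 : Matrix.trace (Eᴴ * E) = 0 := by rw [hEH, hEE, htrE]
    have h3 : Matrix.trace (Eᴴ * E) = ((∑ u, ∑ j, Complex.normSq (E j u) : ℝ) : ℂ) := by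
      simp only [Matrix.trace, Matrix.diag, Matrix.mul_apply, Matrix.conjTranspose_apply,
        RCLike.star_def]
      push_cast
      refine Finset.sum_congr rfl fun u _ => Finset.sum_congr rfl fun j _ => ?_
      rw [← Complex.normSq_eq_conj_mul_self]
    rw [h3] at h1
    have h2 : ∑ u, ∑ j, Complex.normSq (E j u) = 0 := by exact_mod_cast h1
    ext u w
    have h5 := (Finset.sum_eq_zero_iff_of_nonneg
      (fun u' _ => Finset.sum_nonneg (fun j _ => Complex.normSq_nonneg _))).1 h2
    have h6 := (Finset.sum_eq_zero_iff_of_nonneg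
      (fun j _ => Complex.normSq_nonneg (E j w))).1 (h5 w (Finset.mem_univ w))
    have h7 := h6 u (Finset.mem_univ u)
    simpa using Complex.normSq_eq_zero.1 h7
  have h8 : (1 - ((n:ℂ)^2)⁻¹ • Jm n) - Q * Qᴴ = 0 := hE ▸ hE0
  have h9 := sub_eq_zero.1 h8
  exact h9.symm
end restrictor

section final
variable {n : ℕ} (hn : 3 ≤ n) (A : Matrix (Fin n × Fin n) (Fin n × Fin n) ℝ)
    (hA : ∀ p q : Fin n × Fin n, A p q =
      if (p.1.val = 0 ∧ q.1.val ≠ 0 ∧ p.2 = q.2) ∨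
         (p.1.val ≠ 0 ∧ q.1.val = 0 ∧ p.2 ≠ q.2) then 1 else 0)
include hn hA

lemma part1 : ¬ IsNormalM (lap A) := by
  intro hN
  unfold IsNormalM at hN
  have hstar : star (lap A) = (lap A)ᵀ := by
    ext u w
    simp [Matrix.star_eq_conjTranspose, Matrix.conjTranspose_apply]
  have hx : ∀ Y : Matrix (Fin n × Fin n) (Fin n × Fin n) ℝ,
      (((n:ℝ)-1) • (1 : Matrix (Fin n × Fin n) (Fin n × Fin n) ℝ)) * Y
        = Y * (((n:ℝ)-1) • 1) := by
    intro Y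
    rw [Matrix.smul_mul, Matrix.mul_smul, Matrix.one_mul, Matrix.mul_one]
  have ht : ((((n:ℝ)-1) • (1 : Matrix (Fin n × Fin n) (Fin n × Fin n) ℝ)) - A)ᵀ
      = (((n:ℝ)-1) • 1) - Aᵀ := by
    rw [Matrix.transpose_sub, Matrix.transpose_smul, Matrix.transpose_one]
  have hD : Aᵀ * A - A * Aᵀ = 0 := by
    have h := hN
    rw [hstar, lap_eq hn A hA, ht] at h
    have h2 := key_cancel Aᵀ A ((((n:ℝ)-1) • 1)) (hx Aᵀ) (hx A)
    rw [← h2, h, sub_self]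
  have h0 := RKEY hn A hA
  rw [hD] at h0
  have hpos : 0 < n := by omega
  set u0 : Fin n × Fin n := (⟨0, hpos⟩, ⟨0, hpos⟩) with hu0
  have hEntry := congrFun (congrFun h0 u0) u0
  simp only [Matrix.zero_apply, Matrix.add_apply, Matrix.smul_apply, vecMulVec_apply,
    smul_eq_mul] at hEntry
  have h3 : (3:ℝ) ≤ (n:ℝ) := by exact_mod_cast hn
  have hnR : (n:ℝ) ≠ 0 := by positivity
  have hval : ((n:ℝ)^2)⁻¹ * (vR n u0 * vR n u0) + xR n u0 * 1 + 1 * xR n u0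
      = ((n:ℝ)-1)*((n:ℝ)-2) := by
    have hcond : (u0.1 : ℕ) = 0 := rfl
    simp only [vR, xR, hcond, if_true, if_pos]
    field_simp
    ring
  rw [hval] at hEntry
  nlinarith [h3]

lemma part3 : ¬ ∃ S : Finset (Fin n × Fin n), S.Nonempty ∧ S ≠ Finset.univ ∧
    ∀ u ∈ S, ∀ v ∉ S, A u v = 1 ∧ A v u = 0 := by
  rintro ⟨S, ⟨u, hu⟩, hSu, hS⟩
  have hpos : 0 < n := by omega
  have h1n : 1 < n := by omega
  obtain ⟨v, hv⟩ : ∃ v, v ∉ S := by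
    by_contra h
    push_neg at h
    exact hSu (Finset.eq_univ_iff_forall.mpr h)
  have fact1 : ∀ a b : Fin n × Fin n, a.1.val ≠ 0 → b.1.val ≠ 0 → a ∈ S → b ∉ S → False := by
    intro a b ha hb haS hbS
    have h := (hS a haS b hbS).1
    rw [hA] at h
    simp [ha, hb] at h
  have fact2 : ∀ a b : Fin n × Fin n, a.1.val = 0 → b.1.val = 0 → a ∈ S → b ∉ S → False := by
    intro a b ha hb haS hbS
    have h := (hS a haS b hbS).1
    rw [hA] at h
    simp [ha, hb] at h
  by_cases hu0 : u.1.val = 0 <;> by_cases hv0 : v.1.val = 0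
  · exact fact2 u v hu0 hv0 hu hv
  · -- u in S has zero block, some nonzero-block vertex is outside S
    -- all nonzero-block vertices are outside S
    have hall : ∀ w : Fin n × Fin n, w.1.val ≠ 0 → w ∉ S := by
      intro w hw hwS
      exact fact1 w v hw hv0 hwS hv
    -- pick q' ≠ u.2
    set q' : Fin n := if u.2 = ⟨0, hpos⟩ then ⟨1, h1n⟩ else ⟨0, hpos⟩ with hq'
    have hq'ne : q' ≠ u.2 := by
      rw [hq']
      by_cases h : u.2 = ⟨0, hpos⟩
      · rw [if_pos h, h]
        intro hc
        have hc2 := congrArg Fin.val hc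
        simp at hc2
      · rw [if_neg h]
        exact fun hc => h hc.symm
    have hw : ((⟨1, h1n⟩, q') : Fin n × Fin n) ∉ S := hall _ (by simp)
    have h := (hS u hu _ hw).1
    rw [hA] at h
    simp [hu0, hq'ne.symm] at h
  · -- symmetric case
    have hall : ∀ w : Fin n × Fin n, w.1.val = 0 → w ∉ S := by
      intro w hw hwS
      exact fact2 w v hw hv0 hwS hv
    have hw : ((⟨0, hpos⟩, u.2) : Fin n × Fin n) ∉ S := hall _ (by simp)
    have h := (hS u hu _ hw).1
    rw [hA] at h
    simp [hu0] at h
  · exact fact1 u v hu0 hv0 hu hv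
end final

section part2sec
variable {n : ℕ} (hn : 3 ≤ n) (A : Matrix (Fin n × Fin n) (Fin n × Fin n) ℝ)
    (hA : ∀ p q : Fin n × Fin n, A p q =
      if (p.1.val = 0 ∧ q.1.val ≠ 0 ∧ p.2 = q.2) ∨
         (p.1.val ≠ 0 ∧ q.1.val = 0 ∧ p.2 ≠ q.2) then 1 else 0)
include hn hA

lemma part2 (Q : Matrix (Fin n × Fin n) (Fin (n ^ 2 - 1)) ℂ) (hQ : IsRestrictor Q) :
    IsNormalM (Qᴴ * lapC A * Q) := by
  unfold IsNormalM
  rw [Matrix.star_eq_conjTranspose]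
  have hCt : (Qᴴ * lapC A * Q)ᴴ = Qᴴ * (lapC A)ᴴ * Q := by
    simp only [Matrix.conjTranspose_mul, Matrix.conjTranspose_conjTranspose, Matrix.mul_assoc]
  rw [hCt, ← sub_eq_zero]
  have e1 : Qᴴ * (lapC A)ᴴ * Q * (Qᴴ * lapC A * Q)
      = Qᴴ * ((lapC A)ᴴ * ((Q * Qᴴ) * lapC A)) * Q := by
    simp only [Matrix.mul_assoc]
  have e2 : Qᴴ * lapC A * Q * (Qᴴ * (lapC A)ᴴ * Q)
      = Qᴴ * (lapC A * ((Q * Qᴴ) * (lapC A)ᴴ)) * Q := by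
    simp only [Matrix.mul_assoc]
  rw [e1, e2, projQ hn Q hQ]
  simp only [Matrix.sub_mul, Matrix.one_mul, Matrix.smul_mul]
  have hJMh : Jm n * (lapC A)ᴴ = 0 := by
    have h := congrArg Matrix.conjTranspose (MJ hn A hA)
    have hJh : (Jm n)ᴴ = Jm n := by ext u w; simp [Jm, Matrix.conjTranspose_apply]
    simpa [Matrix.conjTranspose_mul, hJh] using h
  rw [hJMh, smul_zero, sub_zero]
  rw [Matrix.mul_sub, Matrix.mul_smul]
  have hvv : (lapC A)ᴴ * (Jm n * lapC A)
      = vecMulVec (fun u => ((vR n u : ℝ):ℂ)) (fun u => ((vR n u : ℝ):ℂ)) := by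
    rw [← Matrix.mul_assoc]
    exact MhJM hn A hA
  rw [hvv]
  -- key algebraic identity
  have hx : ∀ Y : Matrix (Fin n × Fin n) (Fin n × Fin n) ℂ,
      ((((n:ℝ)-1:ℝ):ℂ) • (1 : Matrix (Fin n × Fin n) (Fin n × Fin n) ℂ)) * Y
        = Y * ((((n:ℝ)-1:ℝ):ℂ) • 1) := by
    intro Y
    rw [Matrix.smul_mul, Matrix.mul_smul, Matrix.one_mul, Matrix.mul_one]
  have hMh : (lapC A)ᴴ = (((n:ℝ)-1:ℝ):ℂ) • 1 - (A.map (fun x => (x:ℂ)))ᴴ := by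
    rw [lapC_eq hn A hA]
    simp only [Matrix.conjTranspose_sub, Matrix.conjTranspose_smul, Matrix.conjTranspose_one]
    rw [show star ((((n:ℝ)-1:ℝ):ℂ)) = (((n:ℝ)-1:ℝ):ℂ) by
      simp [RCLike.star_def, Complex.conj_ofReal]]
  have hkey : (lapC A)ᴴ * lapC A - lapC A * (lapC A)ᴴ
      = ((n:ℂ)^2)⁻¹ • vecMulVec (fun u => ((vR n u : ℝ):ℂ)) (fun u => ((vR n u : ℝ):ℂ))
        + vecMulVec (fun u => ((xR n u : ℝ):ℂ)) (fun _ => 1)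
        + vecMulVec (fun _ => 1) (fun u => ((xR n u : ℝ):ℂ)) := by
    rw [hMh, lapC_eq hn A hA]
    rw [key_cancel ((A.map (fun x => (x:ℂ)))ᴴ) (A.map (fun x => (x:ℂ)))
      ((((n:ℝ)-1:ℝ):ℂ) • 1) (hx _) (hx _)]
    exact CKEY hn A hA
  have hfin : (lapC A)ᴴ * lapC A
        - ((n:ℂ)^2)⁻¹ • vecMulVec (fun u => ((vR n u : ℝ):ℂ)) (fun u => ((vR n u : ℝ):ℂ))
      = lapC A * (lapC A)ᴴ
        + vecMulVec (fun u => ((xR n u : ℝ):ℂ)) (fun _ => 1)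
        + vecMulVec (fun _ => 1) (fun u => ((xR n u : ℝ):ℂ)) := by
    have h2 : (lapC A)ᴴ * lapC A - lapC A * (lapC A)ᴴ
        - ((n:ℂ)^2)⁻¹ • vecMulVec (fun u => ((vR n u : ℝ):ℂ)) (fun u => ((vR n u : ℝ):ℂ))
        = vecMulVec (fun u => ((xR n u : ℝ):ℂ)) (fun _ => 1)
          + vecMulVec (fun _ => 1) (fun u => ((xR n u : ℝ):ℂ)) := by
      rw [hkey]; abel
    have h3 : (lapC A)ᴴ * lapC A
        - ((n:ℂ)^2)⁻¹ • vecMulVec (fun u => ((vR n u : ℝ):ℂ)) (fun u => ((vR n u : ℝ):ℂ))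
        = lapC A * (lapC A)ᴴ + ((lapC A)ᴴ * lapC A - lapC A * (lapC A)ᴴ
          - ((n:ℂ)^2)⁻¹ • vecMulVec (fun u => ((vR n u : ℝ):ℂ)) (fun u => ((vR n u : ℝ):ℂ))) := by
      abel
    rw [h3, h2]
    abel
  rw [hfin]
  -- expand and kill the rank-one terms
  have hv1 : (vecMulVec (fun u => ((xR n u : ℝ):ℂ)) (fun _ => (1:ℂ))
      : Matrix (Fin n × Fin n) (Fin n × Fin n) ℂ) * Q = 0 := by
    ext u k
    simp only [Matrix.mul_apply, vecMulVec_apply, mul_one, Matrix.zero_apply]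
    rw [← Finset.mul_sum, Qcolsum hn Q hQ k, mul_zero]
  have hv2 : Qᴴ * (vecMulVec (fun _ => (1:ℂ)) (fun u => ((xR n u : ℝ):ℂ))
      : Matrix (Fin n × Fin n) (Fin n × Fin n) ℂ) = 0 := by
    ext k w
    simp only [Matrix.mul_apply, vecMulVec_apply, one_mul, Matrix.zero_apply,
      Matrix.conjTranspose_apply, RCLike.star_def]
    rw [← Finset.sum_mul, QcolsumStar hn Q hQ k, zero_mul]
  rw [Matrix.mul_add, Matrix.mul_add, Matrix.add_mul, Matrix.add_mul]
  rw [show Qᴴ * (vecMulVec (fun u => ((xR n u : ℝ):ℂ)) (fun _ => (1:ℂ))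
        : Matrix (Fin n × Fin n) (Fin n × Fin n) ℂ) * Q
      = Qᴴ * ((vecMulVec (fun u => ((xR n u : ℝ):ℂ)) (fun _ => (1:ℂ))
        : Matrix (Fin n × Fin n) (Fin n × Fin n) ℂ) * Q) from
    Matrix.mul_assoc _ _ _, hv1, Matrix.mul_zero, hv2, Matrix.zero_mul]
  abel
end part2sec

/-- For `n ≥ 3`, the digraph of order `n²` whose adjacency matrix has
block form `[[0, I, …, I], [J - I, 0, …, 0], …, [J - I, 0, …, 0]]` is restricted-normal
but is not a directed join. -/
theorem restricted_normal_not_directed_join_construction {n : ℕ} (hn : 3 ≤ n)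
    (A : Matrix (Fin n × Fin n) (Fin n × Fin n) ℝ)
    (hA : ∀ p q : Fin n × Fin n, A p q =
      if (p.1.val = 0 ∧ q.1.val ≠ 0 ∧ p.2 = q.2) ∨
         (p.1.val ≠ 0 ∧ q.1.val = 0 ∧ p.2 ≠ q.2) then 1 else 0) :
    ¬ IsNormalM (lap A) ∧
    (∀ Q : Matrix (Fin n × Fin n) (Fin (n ^ 2 - 1)) ℂ, IsRestrictor Q →
      IsNormalM (Qᴴ * lapC A * Q)) ∧
    ¬ ∃ S : Finset (Fin n × Fin n), S.Nonempty ∧ S ≠ Finset.univ ∧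
        ∀ u ∈ S, ∀ v ∉ S, A u v = 1 ∧ A v u = 0 := by
  exact ⟨part1 hn A hA, fun Q hQ => part2 hn A hA Q hQ, part3 hn A hA⟩
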